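/- For every n ≥ 3, the Torelli group 𝒯_n = ker(Out(F_n) → GL(n,ℤ)) contains a subgroup isomorphic to the direct product F_2^{2n−4} of 2n−4 copies of the free group of rank 2; explicitly, with u = [x_1,x_2] and v = [x_1^{-1},x_2^{-1}], the automorphisms Φ(x_1)=x_1, Φ(x_2)=x_2, Φ(x_j)= l_j x_j r_j^{-1} for j ≥ 3, with l_j, r_j ∈ F(u,v), form a subgroup of Aut(F_n) isomorphic to F_2^{2n−4} mapping injectively into 𝒯_n. -/

import Mathlib

/-- The subgroup of inner automorphisms is normal in `MulAut G`. -/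
instance conjRangeNormal (G : Type) [Group G] :
    ((MulAut.conj : G →* MulAut G).range).Normal := by
  constructor
  rintro - ⟨g, rfl⟩ φ
  refine ⟨φ g, ?_⟩
  ext x
  simp [MulAut.conj, mul_assoc]

/-- The outer automorphism group `Out(G) = Aut(G)/Inn(G)`. -/
def Out (G : Type) [Group G] : Type :=
  MulAut G ⧸ (MulAut.conj : G →* MulAut G).range

instance (G : Type) [Group G] : Group (Out G) :=
  QuotientGroup.Quotient.group _

/-- The natural action of `Aut(G)` on the abelianization of `G`
(for `G = F_n`, this is the map `Aut(F_n) → GL(n,ℤ)`). -/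
def autAb (G : Type) [Group G] : MulAut G →* MulAut (Abelianization G) where
  toFun e := e.abelianizationCongr
  map_one' := by
    ext x
    induction x using QuotientGroup.induction_on
    rfl
  map_mul' := by
    intro e f
    ext x
    induction x using QuotientGroup.induction_on
    rfl

/-- The map `Out(G) → Aut(G^{ab})` induced by abelianization (for `G = F_n`,
this is the natural map `Out(F_n) → GL(n,ℤ)`). -/
def outAb (G : Type) [Group G] : Out G →* MulAut (Abelianization G) :=
  QuotientGroup.lift _ (autAb G) (by
    rintro - ⟨g, rfl⟩
    ext x
    induction x using QuotientGroup.induction_on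
    show Abelianization.of (g * _ * g⁻¹) = Abelianization.of _
    rw [map_mul, map_mul, map_inv]
    exact mul_inv_cancel_comm _ _)

/-- The Torelli group `𝒯_n = ker (Out(F_n) → GL(n,ℤ))`. -/
def TorelliOut (n : ℕ) : Subgroup (Out (FreeGroup (Fin n))) :=
  (outAb (FreeGroup (Fin n))).ker


open FreeGroup in
lemma list_const_of_append_eq {α : Type*} :
    ∀ (w : List α) (c : α), w ++ [c] = c :: w → w = List.replicate w.length c := by
  intro w
  induction w with
  | nil => intro c h; rfl
  | cons d t ih =>
    intro c h
    simp only [List.cons_append, List.cons.injEq] at h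
    obtain ⟨rfl, h2⟩ := h
    have := ih d h2
    simp [List.replicate_succ, ← this]

open FreeGroup in
lemma reduce_append_single {α : Type*} [DecidableEq α] (w : List (α × Bool)) (c : α × Bool)
    (hw : reduce w = w) :
    reduce (w ++ [c]) = w ++ [c] ∨ reduce (w ++ [c]) = w.dropLast := by
  have hinv : invRev (w ++ [c]) = (c.1, !c.2) :: invRev w := by
    simp [invRev, List.map_append]
  have hred : reduce (invRev w) = invRev w := by
    rw [reduce_invRev, hw]
  have key : reduce (w ++ [c]) = invRev (reduce ((c.1, !c.2) :: invRev w)) := by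
    rw [← hinv, ← reduce_invRev, invRev_invRev]
  rw [reduce.cons, hred] at key
  rcases hiw : invRev w with _ | ⟨y, ys⟩
  · left
    have : w = [] := by
      have := congrArg invRev hiw
      rwa [invRev_invRev, invRev_empty] at this
    subst this
    simpa using key
  · rw [hiw] at key
    by_cases hc : c.1 = y.1 ∧ (!c.2) = !y.2
    · right
      simp only [hc, if_true] at key
      have hw' : w = invRev ys ++ [(y.1, !y.2)] := by
        have := congrArg invRev hiw
        rw [invRev_invRev] at this
        rw [this]
        simp [invRev]
      rw [key, hw']
      simp [List.dropLast_append]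
    · left
      simp only [hc, if_false] at key
      rw [key, ← hiw, ← hinv, invRev_invRev]

open FreeGroup in
lemma commute_of_gen_pow {α : Type*} [DecidableEq α] (a : α) :
    ∀ (m : ℕ) (g : FreeGroup α), g.toWord.length ≤ m →
      g * of a = of a * g → ∃ k : ℤ, g = of a ^ k := by
  intro m
  induction m with
  | zero =>
    intro g hg _
    refine ⟨0, ?_⟩
    have : g.toWord = [] := List.length_eq_zero_iff.mp (Nat.le_zero.mp hg)
    rw [toWord_eq_nil_iff] at this
    simp [this]
  | succ m ih =>
    intro g hg hcomm
    rcases hwd : g.toWord with _ | ⟨⟨x, b⟩, ys⟩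
    · refine ⟨0, ?_⟩
      rw [toWord_eq_nil_iff] at hwd
      simp [hwd]
    · have hred' : reduce ((x, b) :: ys) = (x, b) :: ys := by
        rw [← hwd]; exact reduce_toWord g
      have hmk : g = mk ((x, b) :: ys) := by rw [← hwd, mk_toWord]
      have hofa : (of a : FreeGroup α) = mk [(a, true)] := rfl
      by_cases hab : x = a ∧ b = false
      · obtain ⟨hx, hb⟩ := hab
        subst hx; subst hb
        have h1 : (of x * g).toWord = ys := by
          rw [hmk, hofa, mul_mk, toWord_mk]
          show reduce ((x, true) :: (x, false) :: ys) = ys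
          rw [reduce.cons, hred']
          simp
        have hlen : (of x * g).toWord.length ≤ m := by
          rw [h1]
          rw [hwd] at hg
          simpa using hg
        have hcomm' : (of x * g) * of x = of x * (of x * g) := by
          rw [mul_assoc, hcomm]
        obtain ⟨k, hk⟩ := ih (of x * g) hlen hcomm'
        refine ⟨k - 1, ?_⟩
        have hg2 : g = (of x)⁻¹ * (of x * g) := by group
        rw [hg2, hk]
        group
      · have hcons : (of a * g).toWord = (a, true) :: (x, b) :: ys := by
          rw [hmk, hofa, mul_mk, toWord_mk]
          show reduce ((a, true) :: (x, b) :: ys) = _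
          rw [reduce.cons, hred']
          have hno : ¬(a = x ∧ true = !b) := by
            rintro ⟨rfl, hb⟩
            exact hab ⟨rfl, by simpa using hb.symm⟩
          simp only [hno, if_false]
        have happ : (g * of a).toWord = reduce (((x, b) :: ys) ++ [(a, true)]) := by
          rw [hmk, hofa, mul_mk, toWord_mk]
        have heq : reduce (((x, b) :: ys) ++ [(a, true)]) = (a, true) :: (x, b) :: ys := by
          rw [← happ, hcomm, hcons]
        rcases reduce_append_single ((x, b) :: ys) (a, true) hred' with h | h
        · rw [h] at heq
          have hconst := list_const_of_append_eq ((x, b) :: ys) (a, true) heq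
          refine ⟨(((x, b) :: ys).length : ℤ), ?_⟩
          have ht : g.toWord = (of a ^ ((x, b) :: ys).length).toWord := by
            rw [toWord_of_pow, hwd, hconst]
            simp
          rw [toWord_injective ht, zpow_natCast]
        · exfalso
          rw [h] at heq
          have := congrArg List.length heq
          simp [List.length_dropLast] at this
          omega

lemma freeGroup_comm_of_subsingleton {β : Type*} [Subsingleton β]
    (x y : FreeGroup β) : Commute x y := by
  have hgen : ∀ (z : FreeGroup β) (t : β), Commute z (FreeGroup.of t) := by
    intro z t
    induction z using FreeGroup.induction_on with
    | C1 => exact Commute.one_left _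
    | of s => rw [Subsingleton.elim s t]
    | inv_of s h => exact h.inv_left
    | mul u v hu hv => exact hu.mul_left hv
  induction y using FreeGroup.induction_on with
  | C1 => exact Commute.one_right _
  | of t => exact hgen x t
  | inv_of t h => exact h.inv_right
  | mul u v hu hv => exact hu.mul_right hv

open scoped commutatorElement in
/-- The commutator subgroup of `F_2` is nonabelian. -/
lemma commutatorF2_nonabelian :
    ∃ h₁ h₂ : commutator (FreeGroup (Fin 2)), ¬ Commute h₁ h₂ := by
  set a : FreeGroup (Fin 2) := FreeGroup.of 0
  set b : FreeGroup (Fin 2) := FreeGroup.of 1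
  have m1 : ⁅a, b⁆ ∈ commutator (FreeGroup (Fin 2)) := by
    rw [commutator_def]
    exact Subgroup.commutator_mem_commutator (Subgroup.mem_top _) (Subgroup.mem_top _)
  have m2 : ⁅a, b⁻¹⁆ ∈ commutator (FreeGroup (Fin 2)) := by
    rw [commutator_def]
    exact Subgroup.commutator_mem_commutator (Subgroup.mem_top _) (Subgroup.mem_top _)
  refine ⟨⟨⁅a, b⁆, m1⟩, ⟨⁅a, b⁻¹⁆, m2⟩, ?_⟩
  intro h
  have : ⁅a, b⁆ * ⁅a, b⁻¹⁆ = ⁅a, b⁻¹⁆ * ⁅a, b⁆ := congrArg Subtype.val h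
  rw [commutatorElement_def, commutatorElement_def] at this
  revert this
  decide

/-- There is an injective group hom `F_2 →* F_2` whose range lies in the
commutator subgroup. -/
lemma exists_embedding_into_commutator :
    ∃ θ : FreeGroup (Fin 2) →* commutator (FreeGroup (Fin 2)), Function.Injective θ := by
  set H := commutator (FreeGroup (Fin 2))
  have : ∃ f : Fin 2 → IsFreeGroup.Generators H, Function.Injective f := by
    by_contra hcon
    push_neg at hcon
    have hsub : Subsingleton (IsFreeGroup.Generators H) := by
      constructor
      intro t t'
      by_contra hne
      exact hcon ![t, t'] (fun i j hij => by fin_cases i <;> fin_cases j <;> simp_all)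
    obtain ⟨h₁, h₂, hnc⟩ := commutatorF2_nonabelian
    apply hnc
    have e := IsFreeGroup.toFreeGroup H
    have := freeGroup_comm_of_subsingleton (e h₁) (e h₂)
    have : e (h₁ * h₂) = e (h₂ * h₁) := by
      rw [map_mul, map_mul]; exact this
    exact e.injective this
  obtain ⟨f, hf⟩ := this
  classical
  obtain ⟨finv, hfinv⟩ := hf.hasLeftInverse
  refine ⟨FreeGroup.lift (fun i => IsFreeGroup.of (f i)), ?_⟩
  have hsect : (IsFreeGroup.lift (fun t => FreeGroup.of (finv t))).comp
      (FreeGroup.lift (fun i => IsFreeGroup.of (f i))) = MonoidHom.id _ := by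
    apply FreeGroup.ext_hom
    intro i
    simp [IsFreeGroup.lift_of, hfinv i]
  intro x y hxy
  have h2 := congrArg (IsFreeGroup.lift (fun t => FreeGroup.of (finv t))) hxy
  have hx : ∀ z, (IsFreeGroup.lift (fun t => FreeGroup.of (finv t)))
      ((FreeGroup.lift (fun i => IsFreeGroup.of (f i))) z) = z := fun z => by
    simpa using DFunLike.congr_fun hsect z
  rw [hx x, hx y] at h2
  exact h2
noncomputable section Stmt7Aux

/-- A fixed injective hom `F_2 →* [F_2,F_2]`. -/
def theta0 : FreeGroup (Fin 2) →* commutator (FreeGroup (Fin 2)) :=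
  exists_embedding_into_commutator.choose

lemma theta0_inj : Function.Injective theta0 :=
  exists_embedding_into_commutator.choose_spec

variable (n : ℕ) (hn : 3 ≤ n)

/-- Inclusion `F_2 →* F_n` on the first two generators. -/
def incl : FreeGroup (Fin 2) →* FreeGroup (Fin n) :=
  FreeGroup.lift (fun i => FreeGroup.of (Fin.castLE (by omega) i))

/-- Retraction `F_n →* F_2` killing generators `x_j`, `j ≥ 2`. -/
def retr : FreeGroup (Fin n) →* FreeGroup (Fin 2) :=
  FreeGroup.lift (fun j => if h : (j : ℕ) < 2 then FreeGroup.of ⟨j, h⟩ else 1)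

lemma retr_incl : (retr n).comp (incl n hn) = MonoidHom.id _ := by
  apply FreeGroup.ext_hom
  intro i
  simp only [incl, retr, MonoidHom.coe_comp, Function.comp_apply, FreeGroup.lift_apply_of,
    MonoidHom.id_apply]
  rw [dif_pos (by simpa using i.isLt)]
  exact congrArg FreeGroup.of (Fin.ext (by simp))

/-- The hom `F_2 →* F_n` with image inside `[F(x_1,x_2), F(x_1,x_2)]`. -/
def theta : FreeGroup (Fin 2) →* FreeGroup (Fin n) :=
  (incl n hn).comp ((commutator (FreeGroup (Fin 2))).subtype.comp theta0)

lemma retr_theta (w : FreeGroup (Fin 2)) :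
    retr n (theta n hn w) = (theta0 w : FreeGroup (Fin 2)) := by
  show ((retr n).comp (incl n hn)) ((commutator (FreeGroup (Fin 2))).subtype (theta0 w)) = _
  rw [retr_incl n hn]
  rfl

/-- The generator images of the automorphism `Φ_c`. -/
def genMap (c : Fin (2 * n - 4) → FreeGroup (Fin 2)) (j : Fin n) : FreeGroup (Fin n) :=
  if h : (j : ℕ) < 2 then FreeGroup.of j
  else theta n hn (c ⟨(j : ℕ) - 2, by omega⟩) * FreeGroup.of j *
    (theta n hn (c ⟨(j : ℕ) - 2 + (n - 2), by have := j.isLt; omega⟩))⁻¹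

/-- The endomorphism `Φ_c` of `F_n`. -/
def phi (c : Fin (2 * n - 4) → FreeGroup (Fin 2)) : FreeGroup (Fin n) →* FreeGroup (Fin n) :=
  FreeGroup.lift (genMap n hn c)

lemma phi_of (c) (j : Fin n) : phi n hn c (FreeGroup.of j) = genMap n hn c j :=
  FreeGroup.lift_apply_of

lemma phi_theta (c) (w : FreeGroup (Fin 2)) :
    phi n hn c (theta n hn w) = theta n hn w := by
  have h : (phi n hn c).comp (incl n hn) = incl n hn := by
    apply FreeGroup.ext_hom
    intro i
    simp only [MonoidHom.coe_comp, Function.comp_apply, incl, FreeGroup.lift_apply_of]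
    rw [phi_of, genMap, dif_pos (by simpa using i.isLt)]
  show (phi n hn c) ((incl n hn) _) = (incl n hn) _
  rw [← MonoidHom.comp_apply, h]

lemma phi_comp (a b) :
    (phi n hn a).comp (phi n hn b) = phi n hn (b * a) := by
  apply FreeGroup.ext_hom
  intro j
  simp only [MonoidHom.coe_comp, Function.comp_apply]
  rw [phi_of, phi_of, genMap, genMap]
  by_cases h : (j : ℕ) < 2
  · rw [dif_pos h, dif_pos h, phi_of, genMap, dif_pos h]
  · rw [dif_neg h, dif_neg h]
    rw [map_mul, map_mul, map_inv, phi_theta, phi_theta, phi_of, genMap, dif_neg h]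
    simp only [Pi.mul_apply, map_mul, mul_inv_rev]
    group

lemma phi_one : phi n hn 1 = MonoidHom.id _ := by
  apply FreeGroup.ext_hom
  intro j
  rw [phi_of, genMap, MonoidHom.id_apply]
  by_cases h : (j : ℕ) < 2
  · rw [dif_pos h]
  · rw [dif_neg h]
    simp

/-- `Φ_{c⁻¹}` as an automorphism of `F_n`. -/
def phiAut (c : Fin (2 * n - 4) → FreeGroup (Fin 2)) : MulAut (FreeGroup (Fin n)) :=
  MonoidHom.toMulEquiv (phi n hn c⁻¹) (phi n hn c)
    (by rw [phi_comp, inv_mul_cancel, phi_one])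
    (by rw [phi_comp, mul_inv_cancel, phi_one])

lemma phiAut_apply (c) (x) : phiAut n hn c x = phi n hn c⁻¹ x := rfl

/-- The homomorphism `F_2^{2n-4} →* Aut(F_n)`. -/
def psi : (Fin (2 * n - 4) → FreeGroup (Fin 2)) →* MulAut (FreeGroup (Fin n)) where
  toFun := phiAut n hn
  map_one' := by
    ext x
    show phi n hn (1 : Fin (2 * n - 4) → FreeGroup (Fin 2))⁻¹ x = x
    rw [inv_one, phi_one]
    rfl
  map_mul' c c' := by
    ext x
    show phi n hn (c * c')⁻¹ x = phi n hn c⁻¹ (phi n hn c'⁻¹ x)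
    rw [← MonoidHom.comp_apply, phi_comp, mul_inv_rev]

/-- The homomorphism `F_2^{2n-4} →* Out(F_n)`. -/
def bigPsi : (Fin (2 * n - 4) → FreeGroup (Fin 2)) →* Out (FreeGroup (Fin n)) :=
  (QuotientGroup.mk' _).comp (psi n hn)

lemma ab_theta (w : FreeGroup (Fin 2)) :
    Abelianization.of (theta n hn w) = 1 := by
  have hmem : (theta0 w : FreeGroup (Fin 2)) ∈ commutator (FreeGroup (Fin 2)) :=
    (theta0 w).2
  have hker := Abelianization.commutator_subset_ker
    ((Abelianization.of (G := FreeGroup (Fin n))).comp (incl n hn)) hmem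
  simpa [theta] using hker

lemma ab_phi (d) (y : FreeGroup (Fin n)) :
    Abelianization.of (phi n hn d y) = Abelianization.of y := by
  have h : (Abelianization.of (G := FreeGroup (Fin n))).comp (phi n hn d) =
      Abelianization.of (G := FreeGroup (Fin n)) := by
    apply FreeGroup.ext_hom
    intro j
    simp only [MonoidHom.coe_comp, Function.comp_apply]
    rw [phi_of, genMap]
    by_cases h : (j : ℕ) < 2
    · rw [dif_pos h]
    · rw [dif_neg h]
      rw [map_mul, map_mul, map_inv, ab_theta, ab_theta]
      simp
  exact DFunLike.congr_fun h y

lemma bigPsi_mem_torelli (c) : bigPsi n hn c ∈ TorelliOut n := by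
  show outAb (FreeGroup (Fin n)) ((QuotientGroup.mk' _) (psi n hn c)) = 1
  have hlift : outAb (FreeGroup (Fin n)) ((QuotientGroup.mk' _) (psi n hn c)) =
      autAb (FreeGroup (Fin n)) (psi n hn c) := rfl
  rw [hlift]
  ext x
  show (autAb (FreeGroup (Fin n)) (psi n hn c)) x = x
  induction x using QuotientGroup.induction_on with
  | H y =>
    show (psi n hn c).abelianizationCongr (Abelianization.of y) = Abelianization.of y
    rw [abelianizationCongr_of]
    exact ab_phi n hn _ y

lemma commute_of_conj {G : Type*} [Group G] {g x : G} (h : g * x * g⁻¹ = x) :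
    x * g = g * x := by
  have := congrArg (· * g) h
  simpa [mul_assoc] using this.symm

lemma bigPsi_inj : Function.Injective (bigPsi n hn) := by
  rw [injective_iff_map_eq_one]
  intro c hc
  have hmem : psi n hn c ∈ (MulAut.conj :
      FreeGroup (Fin n) →* MulAut (FreeGroup (Fin n))).range :=
    (QuotientGroup.eq_one_iff _).mp hc
  obtain ⟨g, hg⟩ := hmem
  have happ : ∀ x, g * x * g⁻¹ = phi n hn c⁻¹ x := by
    intro x
    have := DFunLike.congr_fun hg x
    simpa [MulAut.conj] using this.trans (phiAut_apply n hn c x)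
  -- Step A : g = 1
  have j0 : Fin n := ⟨0, by omega⟩
  have hg1 : g = 1 := by
    have h0 : g * FreeGroup.of (⟨0, by omega⟩ : Fin n) * g⁻¹ =
        FreeGroup.of (⟨0, by omega⟩ : Fin n) := by
      rw [happ, phi_of, genMap, dif_pos (by simp)]
    have h1 : g * FreeGroup.of (⟨1, by omega⟩ : Fin n) * g⁻¹ =
        FreeGroup.of (⟨1, by omega⟩ : Fin n) := by
      rw [happ, phi_of, genMap, dif_pos (by simp)]
    obtain ⟨k, hk⟩ := commute_of_gen_pow (⟨0, by omega⟩ : Fin n) g.toWord.length g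
      le_rfl (commute_of_conj h0).symm
    obtain ⟨l, hl⟩ := commute_of_gen_pow (⟨1, by omega⟩ : Fin n) g.toWord.length g
      le_rfl (commute_of_conj h1).symm
    set e0 : FreeGroup (Fin n) →* Multiplicative ℤ :=
      FreeGroup.lift (fun j => if j = (⟨0, by omega⟩ : Fin n) then
        Multiplicative.ofAdd (1 : ℤ) else 1) with he0
    have hk0 : e0 g = Multiplicative.ofAdd k := by
      rw [hk, map_zpow, he0, FreeGroup.lift_apply_of, if_pos rfl]
      simp [← ofAdd_zsmul]
    have hl0 : e0 g = 1 := by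
      rw [hl, map_zpow, he0, FreeGroup.lift_apply_of, if_neg (by
        intro h
        have := congrArg Fin.val h
        simp at this)]
      simp
    have hkz : k = 0 := by
      rw [hl0] at hk0
      exact_mod_cast (ofAdd_eq_one.mp hk0.symm)
    rw [hk, hkz, zpow_zero]
  -- Step B : phi (c⁻¹) = id
  have hid : ∀ x, phi n hn c⁻¹ x = x := by
    intro x
    rw [← happ x, hg1]
    simp
  -- Step C : all components of c⁻¹ vanish
  have hcomp : ∀ (j : Fin n) (h2 : ¬ (j : ℕ) < 2),
      c⁻¹ ⟨(j : ℕ) - 2, by omega⟩ = 1 ∧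
      c⁻¹ ⟨(j : ℕ) - 2 + (n - 2), by have := j.isLt; omega⟩ = 1 := by
    intro j h2
    have heq : theta n hn (c⁻¹ ⟨(j : ℕ) - 2, by omega⟩) * FreeGroup.of j *
        (theta n hn (c⁻¹ ⟨(j : ℕ) - 2 + (n - 2), by have := j.isLt; omega⟩))⁻¹ =
        FreeGroup.of j := by
      have := hid (FreeGroup.of j)
      rwa [phi_of, genMap, dif_neg h2] at this
    set wL := c⁻¹ (⟨(j : ℕ) - 2, by omega⟩ : Fin (2 * n - 4)) with hwL
    set wR := c⁻¹ (⟨(j : ℕ) - 2 + (n - 2), by have := j.isLt; omega⟩ : Fin (2 * n - 4))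
      with hwR
    have hretr_j : retr n (FreeGroup.of j) = 1 := by
      rw [retr, FreeGroup.lift_apply_of, dif_neg h2]
    have hLR : wL = wR := by
      have := congrArg (retr n) heq
      rw [map_mul, map_mul, map_inv, retr_theta, retr_theta, hretr_j] at this
      rw [mul_one] at this
      have h3 : (theta0 wL : FreeGroup (Fin 2)) = (theta0 wR : FreeGroup (Fin 2)) :=
        mul_inv_eq_one.mp this
      exact theta0_inj (Subtype.coe_injective h3)
    rw [← hLR] at heq
    have hcommj := (commute_of_conj heq).symm
    obtain ⟨k, hk⟩ := commute_of_gen_pow j (theta n hn wL).toWord.length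
      (theta n hn wL) le_rfl hcommj
    have hwL1 : wL = 1 := by
      apply theta0_inj
      apply Subtype.coe_injective
      have := congrArg (retr n) hk
      rw [retr_theta, map_zpow, hretr_j] at this
      simpa using this
    exact ⟨hwL1, hLR ▸ hwL1⟩
  -- Step D : c = 1
  have hcinv : c⁻¹ = 1 := by
    funext i
    by_cases hi : (i : ℕ) < n - 2
    · have h := (hcomp ⟨(i : ℕ) + 2, by omega⟩ (by simp)).1
      have hidx : i = (⟨(i : ℕ) + 2 - 2, by omega⟩ : Fin (2 * n - 4)) :=
        Fin.ext (by simp)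
      rw [hidx]
      exact h
    · have h := (hcomp ⟨(i : ℕ) - (n - 2) + 2, by have := i.isLt; omega⟩ (by simp)).2
      have hidx : i = (⟨(i : ℕ) - (n - 2) + 2 - 2 + (n - 2), by have := i.isLt; omega⟩ :
          Fin (2 * n - 4)) := Fin.ext (by simp; omega)
      rw [hidx]
      exact h
  simpa using congrArg (·⁻¹) hcinv

end Stmt7Aux

/-- For `n ≥ 3` the Torelli group `𝒯_n` contains a subgroup
isomorphic to the direct product `F_2^{2n-4}`; it arises (with `u = [x_1,x_2]`,
`v = [x_1⁻¹,x_2⁻¹]`) from the automorphisms `Φ(x_1)=x_1, Φ(x_2)=x_2,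
Φ(x_j)=l_j x_j r_j⁻¹` (`j ≥ 3`) with `l_j, r_j ∈ F(u,v)`, which form a subgroup
of `Aut(F_n)` isomorphic to `F_2^{2n-4}` mapping injectively into `𝒯_n`. -/
theorem stmt7 (n : ℕ) (hn : 3 ≤ n) :
    ∃ K : Subgroup (Out (FreeGroup (Fin n))),
      K ≤ TorelliOut n ∧
        Nonempty ((∀ _ : Fin (2 * n - 4), FreeGroup (Fin 2)) ≃* K) := by
  refine ⟨(bigPsi n hn).range, ?_, ⟨MonoidHom.ofInjective (bigPsi_inj n hn)⟩⟩
  rintro - ⟨c, rfl⟩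
  exact bigPsi_mem_torelli n hn c
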